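/- Let H be a self-adjoint operator on a Hilbert space, E ∈ ℝ, and ε > 0. Suppose V is a two-dimensional subspace such that ‖(H − E)ψ‖ ≤ 2ε‖ψ‖ for all ψ ∈ V. Then the spectral projection P = χ_{[E−3ε, E+3ε]}(H) satisfies ‖Pψ‖² ≥ (5/9)‖ψ‖² for all ψ ∈ V; consequently P is injective on V and tr P ≥ 2 (i.e., the range of P has dimension at least 2). -/

import Mathlib

/-- `H` self-adjoint on a Hilbert space, `P = χ_{[E-3ε,E+3ε]}(H)` the spectral
projection (characterized here by: `P` is an orthogonal projection commuting with `H`, on its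
range `‖(H-E)ψ‖ ≤ 3ε‖ψ‖`, and on the range of `I - P` one has `‖(H-E)ψ‖ ≥ 3ε‖ψ‖`).
If `V` is a two-dimensional subspace with `‖(H-E)ψ‖ ≤ 2ε‖ψ‖` on `V`, then
`‖Pψ‖² ≥ (5/9)‖ψ‖²` on `V`, `P` is injective on `V`, and `tr P = rank P ≥ 2`. -/
theorem stmt_5 {𝓗 : Type*} [NormedAddCommGroup 𝓗] [InnerProductSpace ℂ 𝓗] [CompleteSpace 𝓗]
    (H : 𝓗 →L[ℂ] 𝓗) (hH : IsSelfAdjoint H) (E ε : ℝ) (hε : 0 < ε)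
    (P : 𝓗 →L[ℂ] 𝓗) (hPsa : IsSelfAdjoint P) (hPidem : P ∘L P = P)
    (hcomm : H ∘L P = P ∘L H)
    (hran : ∀ ψ : 𝓗, ‖H (P ψ) - (E : ℂ) • P ψ‖ ≤ 3 * ε * ‖P ψ‖)
    (hker : ∀ ψ : 𝓗, 3 * ε * ‖ψ - P ψ‖ ≤ ‖H (ψ - P ψ) - (E : ℂ) • (ψ - P ψ)‖)
    (V : Submodule ℂ 𝓗) (hV : Module.rank ℂ V = 2)
    (hVest : ∀ ψ ∈ V, ‖H ψ - (E : ℂ) • ψ‖ ≤ 2 * ε * ‖ψ‖) :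
    (∀ ψ ∈ V, (5 / 9 : ℝ) * ‖ψ‖ ^ 2 ≤ ‖P ψ‖ ^ 2) ∧
      Set.InjOn P (V : Set 𝓗) ∧
      2 ≤ Module.rank ℂ (LinearMap.range (P : 𝓗 →ₗ[ℂ] 𝓗)) := by
  have hadj : ContinuousLinearMap.adjoint P = P :=
    ContinuousLinearMap.isSelfAdjoint_iff'.mp hPsa
  have hidem : ∀ x : 𝓗, P (P x) = P x := fun x =>
    congrArg (fun f : 𝓗 →L[ℂ] 𝓗 => f x) hPidem
  have horth : ∀ x : 𝓗, (inner ℂ (P x) (x - P x) : ℂ) = 0 := by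
    intro x
    have h1 : (inner ℂ (P x) (x - P x) : ℂ) = inner ℂ x (P (x - P x)) := by
      nth_rewrite 1 [← hadj]
      rw [ContinuousLinearMap.adjoint_inner_left]
    rw [h1, map_sub, hidem, sub_self, inner_zero_right]
  have pyth : ∀ x : 𝓗, ‖x‖ ^ 2 = ‖P x‖ ^ 2 + ‖x - P x‖ ^ 2 := by
    intro x
    have hx : x = P x + (x - P x) := by abel
    calc ‖x‖ ^ 2 = ‖P x + (x - P x)‖ ^ 2 := by rw [← hx]
      _ = ‖P x‖ ^ 2 + ‖x - P x‖ ^ 2 := by rw [@norm_add_sq ℂ, horth]; simp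
  have hcontr : ∀ x : 𝓗, ‖x - P x‖ ≤ ‖x‖ := by
    intro x
    have h := pyth x
    have h2 : ‖x - P x‖ ^ 2 ≤ ‖x‖ ^ 2 := by nlinarith [sq_nonneg ‖P x‖]
    have h3 := Real.sqrt_le_sqrt h2
    rwa [Real.sqrt_sq (norm_nonneg _), Real.sqrt_sq (norm_nonneg _)] at h3
  have hc : ∀ x : 𝓗, H (P x) = P (H x) := fun x =>
    congrArg (fun f : 𝓗 →L[ℂ] 𝓗 => f x) hcomm
  have hAcomm : ∀ ψ : 𝓗, H (ψ - P ψ) - (E : ℂ) • (ψ - P ψ)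
      = (H ψ - (E : ℂ) • ψ) - P (H ψ - (E : ℂ) • ψ) := by
    intro ψ
    simp only [map_sub, map_smul, smul_sub, hc]
    abel
  have hkey : ∀ ψ ∈ V, ‖ψ - P ψ‖ ^ 2 ≤ (4 / 9) * ‖ψ‖ ^ 2 := by
    intro ψ hψ
    have h1 := hker ψ
    rw [hAcomm ψ] at h1
    have h2 : ‖(H ψ - (E : ℂ) • ψ) - P (H ψ - (E : ℂ) • ψ)‖ ≤ ‖H ψ - (E : ℂ) • ψ‖ := hcontr _
    have h3 := hVest ψ hψ
    have h4 : 3 * ε * ‖ψ - P ψ‖ ≤ 2 * ε * ‖ψ‖ := by linarith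
    have h5 : (3 * ε * ‖ψ - P ψ‖) ^ 2 ≤ (2 * ε * ‖ψ‖) ^ 2 :=
      pow_le_pow_left₀ (by positivity) h4 2
    nlinarith [mul_pos hε hε, norm_nonneg (ψ - P ψ), norm_nonneg ψ]
  have part1 : ∀ ψ ∈ V, (5 / 9 : ℝ) * ‖ψ‖ ^ 2 ≤ ‖P ψ‖ ^ 2 := by
    intro ψ hψ
    have h1 := pyth ψ
    have h2 := hkey ψ hψ
    linarith
  have part2 : Set.InjOn P (V : Set 𝓗) := by
    intro x hx y hy hxy
    have hsub : x - y ∈ V := V.sub_mem hx hy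
    have h1 := part1 _ hsub
    have hP0 : P (x - y) = 0 := by rw [map_sub, hxy, sub_self]
    rw [hP0] at h1
    simp only [norm_zero] at h1
    have h0 : ‖x - y‖ = 0 := by nlinarith [norm_nonneg (x - y)]
    have := norm_eq_zero.mp h0
    exact sub_eq_zero.mp this
  refine ⟨part1, part2, ?_⟩
  let f : V →ₗ[ℂ] LinearMap.range (P : 𝓗 →ₗ[ℂ] 𝓗) :=
    LinearMap.codRestrict _ ((P : 𝓗 →ₗ[ℂ] 𝓗).comp V.subtype)
      (fun v => LinearMap.mem_range_self _ _)
  have hf : Function.Injective f := by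
    intro a b hab
    have : P (a : 𝓗) = P (b : 𝓗) := congrArg Subtype.val hab
    exact Subtype.ext (part2 a.2 b.2 this)
  calc (2 : Cardinal) = Module.rank ℂ V := hV.symm
    _ ≤ Module.rank ℂ (LinearMap.range (P : 𝓗 →ₗ[ℂ] 𝓗)) :=
        LinearMap.rank_le_of_injective f hf
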